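/- Let m be a natural number and u > 0 a real number. Then ∫₀^{π/2} (cos α)·(sin α)^{2m+1} / ((cos α)² + u) dα = (1/2)·(1+u)^m·ln((1+u)/u) − (1/2)·∑_{n=0}^{m−1} (1+u)^n/(m−n), where the sum is empty (equal to 0) when m = 0. -/

import Mathlib

open Real
open scoped BigOperators

lemma contInt (m : ℕ) (u : ℝ) (hu : 0 < u) :
    IntervalIntegrable (fun α => Real.cos α * Real.sin α ^ (2 * m + 1) / (Real.cos α ^ 2 + u))
      MeasureTheory.volume 0 (Real.pi / 2) := by
  apply Continuous.intervalIntegrable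
  exact (continuous_cos.mul (continuous_sin.pow _)).div
    ((continuous_cos.pow 2).add continuous_const)
    (fun x => ne_of_gt (by positivity))

lemma powInt (m : ℕ) :
    ∫ α in (0:ℝ)..(Real.pi / 2), Real.cos α * Real.sin α ^ (2 * m + 1)
      = 1 / (2 * m + 2) := by
  have h : ∀ α ∈ Set.uIcc (0:ℝ) (Real.pi/2),
      HasDerivAt (fun x => Real.sin x ^ (2*m+2) / (2*m+2))
        (Real.cos α * Real.sin α ^ (2*m+1)) α := by
    intro α _
    have := ((Real.hasDerivAt_sin α).pow (2*m+2)).div_const (2*m+2)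
    refine HasDerivAt.congr_deriv this ?_
    have : (2*m+2 : ℝ) ≠ 0 := by positivity
    rw [show 2*m+2-1 = 2*m+1 by omega]
    push_cast
    field_simp
  rw [intervalIntegral.integral_eq_sub_of_hasDerivAt h
    (by apply Continuous.intervalIntegrable; exact continuous_cos.mul (continuous_sin.pow _))]
  simp [Real.sin_pi_div_two]

lemma baseInt (u : ℝ) (hu : 0 < u) :
    ∫ α in (0:ℝ)..(Real.pi / 2), Real.cos α * Real.sin α / (Real.cos α ^ 2 + u)
      = (1/2) * Real.log ((1+u)/u) := by
  have h : ∀ α ∈ Set.uIcc (0:ℝ) (Real.pi/2),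
      HasDerivAt (fun x => -(1/2) * Real.log (Real.cos x ^ 2 + u))
        (Real.cos α * Real.sin α / (Real.cos α ^ 2 + u)) α := by
    intro α _
    have hD : (0:ℝ) < Real.cos α ^ 2 + u := by positivity
    have h1 : HasDerivAt (fun x => Real.cos x ^ 2 + u)
        (2 * Real.cos α ^ 1 * (-Real.sin α)) α :=
      ((Real.hasDerivAt_cos α).pow 2).add_const u
    have h2 := (Real.hasDerivAt_log (ne_of_gt hD)).comp α h1
    have := h2.const_mul (-(1/2) : ℝ)
    refine HasDerivAt.congr_deriv this ?_
    field_simp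
  rw [intervalIntegral.integral_eq_sub_of_hasDerivAt h]
  · rw [Real.cos_pi_div_two, Real.cos_zero]
    rw [Real.log_div (by positivity) (ne_of_gt hu)]
    ring_nf
  · apply Continuous.intervalIntegrable
    exact (continuous_cos.mul continuous_sin).div
      ((continuous_cos.pow 2).add continuous_const)
      (fun x => ne_of_gt (by positivity))

theorem stmt_14 (m : ℕ) (u : ℝ) (hu : 0 < u) :
    ∫ α in (0 : ℝ)..(Real.pi / 2),
        Real.cos α * Real.sin α ^ (2 * m + 1) / (Real.cos α ^ 2 + u) =
      (1 / 2) * (1 + u) ^ m * Real.log ((1 + u) / u) -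
        (1 / 2) * ∑ n ∈ Finset.range m, (1 + u) ^ n / ((m - n : ℕ) : ℝ) := by
  induction m with
  | zero =>
      simpa using baseInt u hu
  | succ m ih =>
      have key : ∀ α : ℝ,
          Real.cos α * Real.sin α ^ (2 * (m+1) + 1) / (Real.cos α ^ 2 + u)
            = (1+u) * (Real.cos α * Real.sin α ^ (2*m+1) / (Real.cos α ^ 2 + u))
              - Real.cos α * Real.sin α ^ (2*m+1) := by
        intro α
        have hD : Real.cos α ^ 2 + u ≠ 0 := by positivity
        have hs : Real.sin α ^ (2*(m+1)+1)
            = Real.sin α ^ (2*m+1) * (1 - Real.cos α ^ 2) := by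
          rw [← Real.sin_sq]; ring
        rw [hs]; field_simp; ring
      have hint := contInt m u hu
      have hint2 : IntervalIntegrable (fun α => Real.cos α * Real.sin α ^ (2*m+1))
          MeasureTheory.volume 0 (Real.pi/2) := by
        apply Continuous.intervalIntegrable
        exact continuous_cos.mul (continuous_sin.pow _)
      calc ∫ α in (0:ℝ)..(Real.pi/2),
            Real.cos α * Real.sin α ^ (2*(m+1)+1) / (Real.cos α ^ 2 + u)
          = ∫ α in (0:ℝ)..(Real.pi/2),
            ((1+u) * (Real.cos α * Real.sin α ^ (2*m+1) / (Real.cos α ^ 2 + u))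
              - Real.cos α * Real.sin α ^ (2*m+1)) := by
            simp_rw [key]
        _ = (1+u) * (∫ α in (0:ℝ)..(Real.pi/2),
              Real.cos α * Real.sin α ^ (2*m+1) / (Real.cos α ^ 2 + u))
            - ∫ α in (0:ℝ)..(Real.pi/2), Real.cos α * Real.sin α ^ (2*m+1) := by
            rw [intervalIntegral.integral_sub (hint.const_mul _) hint2,
              intervalIntegral.integral_const_mul]
        _ = (1+u) * ((1/2) * (1+u)^m * Real.log ((1+u)/u)
              - (1/2) * ∑ n ∈ Finset.range m, (1+u)^n / ((m - n : ℕ) : ℝ))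
            - 1 / (2*m+2) := by rw [ih, powInt]
        _ = (1/2) * (1+u)^(m+1) * Real.log ((1+u)/u)
            - (1/2) * ∑ n ∈ Finset.range (m+1), (1+u)^n / (((m+1) - n : ℕ) : ℝ) := by
            rw [Finset.sum_range_succ']
            have hc : ∀ i ∈ Finset.range m,
                (1+u)^(i+1) / (((m+1) - (i+1) : ℕ) : ℝ)
                  = (1+u) * ((1+u)^i / ((m - i : ℕ) : ℝ)) := by
              intro i _
              simp [Nat.succ_sub_succ, pow_succ, mul_comm, mul_div_assoc]
            rw [Finset.sum_congr rfl hc, ← Finset.mul_sum]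
            simp only [Nat.sub_zero, pow_zero]
            have hm : (m:ℝ) + 1 ≠ 0 := by positivity
            push_cast
            field_simp
            ring
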